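/- Let A be n×n, F be m×m, g ∈ ℝ^m, H = I_m ⊗ A + F ⊗ I_n, G = g ⊗ I_n. If (F, g) is a controllable pair (i.e., the m×m matrix [g, Fg, ..., F^{m−1}g] is invertible), then the mn×mn matrix [G, HG, ..., H^{m−1}G] has rank mn; in particular (H, G) is a controllable pair with controllability index m. -/
import Mathlib

open Matrix Kronecker

def blockConcat {m n : ℕ} (X : Fin m → Matrix (Fin m × Fin n) (Unit × Fin n) ℝ) :
    Matrix (Fin m × Fin n) (Fin m × Fin n) ℝ :=
  Matrix.of fun r c => X c.1 r ((), c.2)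

variable {m n : ℕ}

lemma kron_pow_left (F : Matrix (Fin m) (Fin m) ℝ) (k : ℕ) :
    (F ⊗ₖ (1 : Matrix (Fin n) (Fin n) ℝ)) ^ k = (F ^ k) ⊗ₖ (1 : Matrix (Fin n) (Fin n) ℝ) := by
  induction k with
  | zero => simp [Matrix.one_kronecker_one]
  | succ k ih => rw [pow_succ, pow_succ, ih, ← Matrix.mul_kronecker_mul, mul_one]

lemma kron_pow_right (A : Matrix (Fin n) (Fin n) ℝ) (k : ℕ) :
    ((1 : Matrix (Fin m) (Fin m) ℝ) ⊗ₖ A) ^ k = (1 : Matrix (Fin m) (Fin m) ℝ) ⊗ₖ (A ^ k) := by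
  induction k with
  | zero => simp [Matrix.one_kronecker_one]
  | succ k ih => rw [pow_succ, pow_succ, ih, ← Matrix.mul_kronecker_mul, mul_one]

lemma Hpow (A : Matrix (Fin n) (Fin n) ℝ) (F : Matrix (Fin m) (Fin m) ℝ) (k : ℕ) :
    ((1 : Matrix (Fin m) (Fin m) ℝ) ⊗ₖ A + F ⊗ₖ (1 : Matrix (Fin n) (Fin n) ℝ)) ^ k
      = ∑ j ∈ Finset.range (k + 1), (k.choose j : ℝ) • ((F ^ j) ⊗ₖ (A ^ (k - j))) := by
  have hc : Commute (F ⊗ₖ (1 : Matrix (Fin n) (Fin n) ℝ))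
      ((1 : Matrix (Fin m) (Fin m) ℝ) ⊗ₖ A) := by
    unfold Commute SemiconjBy
    rw [← Matrix.mul_kronecker_mul, ← Matrix.mul_kronecker_mul, one_mul, mul_one, one_mul,
      mul_one]
  rw [add_comm, hc.add_pow]
  refine Finset.sum_congr rfl fun j hj => ?_
  rw [kron_pow_left, kron_pow_right, ← Matrix.mul_kronecker_mul, mul_one, one_mul,
    Nat.cast_smul_eq_nsmul, nsmul_eq_mul]
  exact (Nat.commute_cast _ _).eq

lemma entry_formula (A : Matrix (Fin n) (Fin n) ℝ) (F : Matrix (Fin m) (Fin m) ℝ)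
    (g : Fin m → ℝ) (k : ℕ) (r1 : Fin m) (r2 c2 : Fin n) :
    (((1 : Matrix (Fin m) (Fin m) ℝ) ⊗ₖ A + F ⊗ₖ (1 : Matrix (Fin n) (Fin n) ℝ)) ^ k *
        ((Matrix.of fun i (_ : Unit) => g i) ⊗ₖ (1 : Matrix (Fin n) (Fin n) ℝ)))
        (r1, r2) ((), c2)
      = ∑ j ∈ Finset.range (k + 1),
          (k.choose j : ℝ) * (F ^ j).mulVec g r1 * (A ^ (k - j)) r2 c2 := by
  rw [Hpow, Matrix.sum_mul, Matrix.sum_apply]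
  refine Finset.sum_congr rfl fun j hj => ?_
  rw [Matrix.smul_mul, ← Matrix.mul_kronecker_mul, Matrix.smul_apply,
    Matrix.kroneckerMap_apply, Matrix.mul_one, smul_eq_mul]
  simp only [Matrix.mul_apply, Matrix.of_apply, Matrix.mulVec, dotProduct]
  ring

/-- If `(F, g)` is a controllable pair, then `(H, G)` with `H = I_m ⊗ A + F ⊗ I_n`,
`G = g ⊗ I_n` is controllable with controllability index `m`:
the matrix `[G, HG, …, H^{m-1}G]` has full rank `mn`. -/
theorem controllable_kron (m n : ℕ) (A : Matrix (Fin n) (Fin n) ℝ)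
    (F : Matrix (Fin m) (Fin m) ℝ) (g : Fin m → ℝ)
    (hctrb : IsUnit (Matrix.of fun i k : Fin m => (F ^ (k : ℕ)).mulVec g i)) :
    (blockConcat (fun k =>
        ((1 : Matrix (Fin m) (Fin m) ℝ) ⊗ₖ A + F ⊗ₖ (1 : Matrix (Fin n) (Fin n) ℝ)) ^ (k : ℕ) *
          ((Matrix.of fun i (_ : Unit) => g i) ⊗ₖ (1 : Matrix (Fin n) (Fin n) ℝ)))).rank =
      m * n := by
  classical
  set W : Matrix (Fin m) (Fin m) ℝ :=
    Matrix.of fun i k : Fin m => (F ^ (k : ℕ)).mulVec g i with hWdef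
  set S : Matrix (Fin m × Fin n) (Fin m × Fin n) ℝ :=
    Matrix.of fun p q => (((q.1 : ℕ).choose (p.1 : ℕ) : ℝ)) *
      (A ^ ((q.1 : ℕ) - (p.1 : ℕ))) p.2 q.2 with hSdef
  have key : blockConcat (fun k =>
        ((1 : Matrix (Fin m) (Fin m) ℝ) ⊗ₖ A + F ⊗ₖ (1 : Matrix (Fin n) (Fin n) ℝ)) ^ (k : ℕ) *
          ((Matrix.of fun i (_ : Unit) => g i) ⊗ₖ (1 : Matrix (Fin n) (Fin n) ℝ)))
      = (W ⊗ₖ (1 : Matrix (Fin n) (Fin n) ℝ)) * S := by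
    ext ⟨r1, r2⟩ ⟨c1, c2⟩
    show (((1 : Matrix (Fin m) (Fin m) ℝ) ⊗ₖ A + F ⊗ₖ (1 : Matrix (Fin n) (Fin n) ℝ)) ^ (c1 : ℕ) *
          ((Matrix.of fun i (_ : Unit) => g i) ⊗ₖ (1 : Matrix (Fin n) (Fin n) ℝ)))
          (r1, r2) ((), c2) = _
    rw [entry_formula, Matrix.mul_apply]
    rw [Fintype.sum_prod_type]
    have rhs_simp : ∀ p1 : Fin m,
        (∑ p2 : Fin n, (W ⊗ₖ (1 : Matrix (Fin n) (Fin n) ℝ)) (r1, r2) (p1, p2) *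
          S (p1, p2) (c1, c2))
        = (F ^ (p1 : ℕ)).mulVec g r1 *
            (((c1 : ℕ).choose (p1 : ℕ) : ℝ) * (A ^ ((c1 : ℕ) - (p1 : ℕ))) r2 c2) := by
      intro p1
      simp only [Matrix.kroneckerMap_apply, hSdef, hWdef, Matrix.of_apply, Matrix.one_apply,
        mul_ite, mul_one, mul_zero, ite_mul, zero_mul]
      rw [Finset.sum_ite_eq Finset.univ r2]
      simp
    simp only [rhs_simp]
    rw [Fin.sum_univ_eq_sum_range
      (fun j => (F ^ j).mulVec g r1 *
        (((c1 : ℕ).choose j : ℝ) * (A ^ ((c1 : ℕ) - j)) r2 c2)) m]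
    have hz : ∀ x ∈ Finset.range m, x ∉ Finset.range ((c1 : ℕ) + 1) →
        (F ^ x).mulVec g r1 * (((c1 : ℕ).choose x : ℝ) * (A ^ ((c1 : ℕ) - x)) r2 c2) = 0 := by
      intro x _ hx'
      have hlt : (c1 : ℕ) < x := by
        simp only [Finset.mem_range] at hx'; omega
      rw [Nat.choose_eq_zero_of_lt hlt]
      simp
    rw [← Finset.sum_subset (Finset.range_subset_range.mpr c1.isLt) hz]
    exact Finset.sum_congr rfl fun j hj => by ring
  -- invertibility of W ⊗ 1
  have hWk : IsUnit ((W ⊗ₖ (1 : Matrix (Fin n) (Fin n) ℝ))) := by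
    rw [Matrix.isUnit_iff_isUnit_det, Matrix.det_kronecker, Matrix.det_one, one_pow, mul_one]
    exact ((Matrix.isUnit_iff_isUnit_det W).mp hctrb).pow _
  -- invertibility of S
  have hSbt : S.BlockTriangular (fun p : Fin m × Fin n => p.1) := by
    intro p q hpq
    have : ((q.1 : ℕ).choose (p.1 : ℕ) : ℝ) = 0 := by
      rw [Nat.choose_eq_zero_of_lt (by exact_mod_cast hpq)]
      simp
    simp [hSdef, this]
  have hSdet : S.det = 1 := by
    rw [hSbt.det]
    refine Finset.prod_eq_one fun a _ => ?_
    have : S.toSquareBlock (fun p : Fin m × Fin n => p.1) a = 1 := by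
      ext p q
      rcases p with ⟨⟨p1, p2⟩, hp⟩
      rcases q with ⟨⟨q1, q2⟩, hq⟩
      simp only [Matrix.toSquareBlock_def, Matrix.of_apply, hSdef] at *
      subst hp
      simp only at hq
      subst hq
      rw [Nat.choose_self]
      simp only [Nat.sub_self, pow_zero, Nat.cast_one, one_mul]
      rw [Matrix.one_apply, Matrix.one_apply]
      simp [Subtype.ext_iff, Prod.ext_iff]
    rw [this, Matrix.det_one]
  have hSu : IsUnit S := by
    rw [Matrix.isUnit_iff_isUnit_det, hSdet]; exact isUnit_one
  rw [key, Matrix.rank_of_isUnit _ (hWk.mul hSu)]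
  simp
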